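/- The 5×5 Horn matrix H, with diagonal entries 1 and off-diagonal entries H_{ij} = -1 if |i-j| ∈ {1,4} and H_{ij} = 1 otherwise, is copositive. -/
import Mathlib


open scoped Matrix

def Copositive {n : ℕ} (A : Matrix (Fin n) (Fin n) ℝ) : Prop :=
  ∀ x : Fin n → ℝ, (∀ i, 0 ≤ x i) → 0 ≤ x ⬝ᵥ A.mulVec x

def HornMatrix : Matrix (Fin 5) (Fin 5) ℝ :=
  !![1, -1, 1, 1, -1;
     -1, 1, -1, 1, 1;
     1, -1, 1, -1, 1;
     1, 1, -1, 1, -1;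
     -1, 1, 1, -1, 1]

theorem hornMatrix_copositive : Copositive HornMatrix := by
  intro x hx
  have h0 := hx 0; have h1 := hx 1; have h2 := hx 2; have h3 := hx 3; have h4 := hx 4
  simp [dotProduct, Matrix.mulVec, HornMatrix, Fin.sum_univ_five,
    Matrix.cons_val_zero, Matrix.cons_val_one, Matrix.head_cons, Matrix.cons_val_succ, Matrix.vecHead, Matrix.vecTail]
  rcases le_total (x 4) (x 3) with h | h
  · nlinarith [sq_nonneg (x 0 - x 1 + x 2 - x 3 + x 4), mul_nonneg h1 h4,
      mul_nonneg h0 (sub_nonneg.2 h)]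
  · nlinarith [sq_nonneg (x 0 - x 1 + x 2 + x 3 - x 4), mul_nonneg h1 h3,
      mul_nonneg h2 (sub_nonneg.2 h)]
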